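/- Let F ⊆ S_n be a t-cycle-intersecting family that is maximal, fixed and compressed, and let g be any generating set of F. Then: (1) L_*(g) is a generating set of F; (2) s⁺(L_*(g)) ≤ s⁺(g); and (3) for any set B that can be obtained by left-shifting a set in g (i.e. B ∈ L(B′) for some B′ ∈ g), either B or a proper subset of B lies in L_*(g). -/

import Mathlib

open Equiv Finset
open scoped Classical

noncomputable section

/-- A common cycle of two permutations `σ` and `π`: a nonempty subset `B` invariant
under both, on which they agree, and on which `σ` acts as a single cycle. -/
def IsCommonCycle {n : ℕ} (σ π : Equiv.Perm (Fin n)) (B : Finset (Fin n)) : Prop :=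
  B.Nonempty ∧ (∀ x ∈ B, σ x ∈ B) ∧ (∀ x ∈ B, π x ∈ B) ∧
  (∀ x ∈ B, σ x = π x) ∧ (∀ x ∈ B, ∀ y ∈ B, σ.SameCycle x y)

/-- A family of permutations is `t`-cycle-intersecting if any two of its members
have at least `t` common cycles on pairwise disjoint subsets. -/
def TCycleIntersecting {n : ℕ} (t : ℕ) (F : Set (Equiv.Perm (Fin n))) : Prop :=
  ∀ σ ∈ F, ∀ π ∈ F, ∃ 𝒞 : Finset (Finset (Fin n)),
    t ≤ 𝒞.card ∧ (∀ B ∈ 𝒞, IsCommonCycle σ π B) ∧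
    (𝒞 : Set (Finset (Fin n))).Pairwise fun A B => Disjoint A B

/-- The `ij`-fixing of a permutation: if `σ i = j` then make `i` a fixed point and
send `σ⁻¹ i` to `j`, leaving everything else unchanged. -/
def ijFix {n : ℕ} (i j : Fin n) (σ : Equiv.Perm (Fin n)) : Equiv.Perm (Fin n) :=
  if σ i = j then σ * Equiv.swap i (σ⁻¹ i) else σ

/-- The `ij`-fixing operation on a family of permutations. -/
def fixFamOp {n : ℕ} (i j : Fin n) (A : Set (Equiv.Perm (Fin n))) :
    Set (Equiv.Perm (Fin n)) :=
  (fun σ => if ijFix i j σ ∈ A then σ else ijFix i j σ) '' A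

/-- A family is fixed if it is closed under all `ij`-fixing operations. -/
def IsFixedFam {n : ℕ} (A : Set (Equiv.Perm (Fin n))) : Prop :=
  ∀ i j : Fin n, i ≠ j → fixFamOp i j A = A

/-- The `(i,j)`-compression of a permutation: if `σ i ≠ i` and `σ j = j`, then
fix `i`, send `j` to `σ i` and `σ⁻¹ i` to `j`; otherwise leave `σ` unchanged. -/
def compPerm {n : ℕ} (i j : Fin n) (σ : Equiv.Perm (Fin n)) : Equiv.Perm (Fin n) :=
  if σ i ≠ i ∧ σ j = j then (Equiv.swap i (σ i) * Equiv.swap i j) * σ else σ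

/-- The `(i,j)`-compression operation on a family of permutations. -/
def compFam {n : ℕ} (i j : Fin n) (A : Set (Equiv.Perm (Fin n))) :
    Set (Equiv.Perm (Fin n)) :=
  (fun σ => if compPerm i j σ ∈ A then σ else compPerm i j σ) '' A

/-- A family is compressed if it is closed under all `(i,j)`-compressions. -/
def IsCompressedFam {n : ℕ} (A : Set (Equiv.Perm (Fin n))) : Prop :=
  ∀ i j : Fin n, i < j → compFam i j A = A

/-- `F` is the stabilizer of `t` points: there are `t` distinct points such that `F`
consists exactly of the permutations fixing all of them. -/
def IsTPointStabilizer {n : ℕ} (t : ℕ) (F : Set (Equiv.Perm (Fin n))) : Prop :=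
  ∃ a : Fin t ↪ Fin n, F = {σ | ∀ k, σ (a k) = a k}

/-- The set of fixed points of a permutation. -/
def fixSet {n : ℕ} (σ : Equiv.Perm (Fin n)) : Finset (Fin n) :=
  Finset.univ.filter fun x => σ x = x

/-- The up-permutation of a set `B`: all permutations fixing every element of `B`. -/
def UpSet {n : ℕ} (B : Finset (Fin n)) : Set (Equiv.Perm (Fin n)) :=
  {σ | ∀ x ∈ B, σ x = x}

/-- The up-permutation of a collection of sets. -/
def UpFam {n : ℕ} (g : Set (Finset (Fin n))) : Set (Equiv.Perm (Fin n)) :=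
  ⋃ B ∈ g, UpSet B

/-- `g` is a generating set for `F`: it contains no set of size `n-1` and
`Up(g) = F`. -/
def IsGenSet {n : ℕ} (g : Set (Finset (Fin n))) (F : Set (Equiv.Perm (Fin n))) : Prop :=
  (∀ B ∈ g, B.card ≠ n - 1) ∧ UpFam g = F

/-- `s⁺(B)`: the largest element of `B`, in the 1-based numbering of `[n] = {1,…,n}`
(so `s⁺(∅) = 0`). -/
def sPlus {n : ℕ} (B : Finset (Fin n)) : ℕ := B.sup fun x => (x : ℕ) + 1

/-- `s⁺(g) = max {s⁺(B) : B ∈ g}`. -/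
def sPlusFam {n : ℕ} (g : Set (Finset (Fin n))) : ℕ := sSup (sPlus '' g)

/-- `s_min(G(F)) = min {s⁺(g) : g a generating set of F}`. -/
def sMin {n : ℕ} (F : Set (Equiv.Perm (Fin n))) : ℕ :=
  sInf (sPlusFam '' {g | IsGenSet g F})

/-- `L(B)`: all sets obtained from `B` by left-shifting, i.e. sets of the same size
whose `i`-th smallest element is at most the `i`-th smallest element of `B`. -/
def LSet {n : ℕ} (B : Finset (Fin n)) : Set (Finset (Fin n)) :=
  {A | ∃ h : A.card = B.card, ∀ i : Fin B.card,
      A.orderEmbOfFin h i ≤ B.orderEmbOfFin rfl i}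

/-- `L(g) = ⋃_{B ∈ g} L(B)`. -/
def LFam {n : ℕ} (g : Set (Finset (Fin n))) : Set (Finset (Fin n)) :=
  ⋃ B ∈ g, LSet B

/-- `L_*(g)`: the minimal (under inclusion) elements of `L(g)`. -/
def Lstar {n : ℕ} (g : Set (Finset (Fin n))) : Set (Finset (Fin n)) :=
  {A | A ∈ LFam g ∧ ∀ A' ∈ LFam g, A' ⊆ A → A' = A}

/-- The interval `[m] = {1,…,m}` inside `Fin n` (1-based). -/
def Ival (n m : ℕ) : Finset (Fin n) := Finset.univ.filter fun x => (x : ℕ) < m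

/-- `D(E) = {σ : fix(σ) ∩ [s⁺(E)] = E}`. -/
def DSet {n : ℕ} (E : Finset (Fin n)) : Set (Equiv.Perm (Fin n)) :=
  {σ | fixSet σ ∩ Ival n (sPlus E) = E}

section Aux
variable {n : ℕ}

lemma compPerm_mem {F : Set (Equiv.Perm (Fin n))} (hcomp : IsCompressedFam F)
    {i j : Fin n} (hij : i < j) {σ : Equiv.Perm (Fin n)} (hσ : σ ∈ F) :
    compPerm i j σ ∈ F := by
  by_cases h : compPerm i j σ ∈ F
  · exact h
  · have hmem : compPerm i j σ ∈ compFam i j F := ⟨σ, hσ, if_neg h⟩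
    rwa [hcomp i j hij] at hmem

lemma step_lemma {F : Set (Equiv.Perm (Fin n))} (hcomp : IsCompressedFam F)
    {B : Finset (Fin n)} {a b : Fin n} (hb : b ∈ B) (ha : a ∉ B) (hab : a < b)
    (hB : UpSet B ⊆ F) : UpSet (insert a (B.erase b)) ⊆ F := by
  intro σ hσ
  have hane : a ≠ b := ne_of_lt hab
  have hσa : σ a = a := hσ a (Finset.mem_insert_self _ _)
  have hσx : ∀ x ∈ B, x ≠ b → σ x = x := fun x hx hxb =>
    hσ x (Finset.mem_insert_of_mem (Finset.mem_erase.2 ⟨hxb, hx⟩))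
  by_cases hσb : σ b = b
  · refine hB fun x hx => ?_
    by_cases hxb : x = b
    · rw [hxb]; exact hσb
    · exact hσx x hx hxb
  · have hσba : σ b ≠ a := fun h => hane (σ.injective (h.trans hσa.symm)).symm
    set τ := Equiv.swap a b * σ * Equiv.swap a b with hτdef
    have hτb : τ b = b := by
      simp [hτdef, Equiv.Perm.mul_apply, Equiv.swap_apply_right, hσa, Equiv.swap_apply_left]
    have hτa : τ a = σ b := by
      have h1 : Equiv.swap a b (σ b) = σ b := Equiv.swap_apply_of_ne_of_ne hσba hσb
      simp [hτdef, Equiv.Perm.mul_apply, Equiv.swap_apply_left, h1]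
    have hτB : τ ∈ UpSet B := by
      intro x hx
      by_cases hxb : x = b
      · rw [hxb]; exact hτb
      · have hxa : x ≠ a := fun h => ha (h ▸ hx)
        have hsw : Equiv.swap a b x = x := Equiv.swap_apply_of_ne_of_ne hxa hxb
        simp [hτdef, Equiv.Perm.mul_apply, hsw, hσx x hx hxb]
    have hcF : compPerm a b τ ∈ F := compPerm_mem hcomp hab (hB hτB)
    have heq : compPerm a b τ = σ := by
      rw [compPerm, if_pos ⟨by rw [hτa]; exact hσba, hτb⟩]
      refine Equiv.ext fun x => ?_
      simp only [Equiv.Perm.mul_apply, hτa]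
      have hτx : τ x = Equiv.swap a b (σ (Equiv.swap a b x)) := by
        simp [hτdef, Equiv.Perm.mul_apply]
      rw [hτx, Equiv.swap_apply_self]
      by_cases hx1 : x = a
      · subst hx1
        rw [Equiv.swap_apply_left, Equiv.swap_apply_right, hσa]
      · by_cases hx2 : x = b
        · subst hx2
          rw [Equiv.swap_apply_right, hσa, Equiv.swap_apply_left]
        · rw [Equiv.swap_apply_of_ne_of_ne hx1 hx2]
          exact Equiv.swap_apply_of_ne_of_ne
            (fun h => hx1 (σ.injective (h.trans hσa.symm)))
            (fun h => hx2 (σ.injective h))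
    exact heq ▸ hcF

lemma orderEmbOfFin_cast {α : Type*} [LinearOrder α] (s : Finset α) {k k' : ℕ}
    (h : s.card = k) (h' : s.card = k') (e : k' = k) (j : Fin k') :
    s.orderEmbOfFin h' j = s.orderEmbOfFin h (Fin.cast e j) := by
  subst e; rfl

lemma key_lemma {F : Set (Equiv.Perm (Fin n))} (hcomp : IsCompressedFam F) :
    ∀ (N : ℕ) (B A : Finset (Fin n)), (∑ x ∈ B, (x : ℕ)) < N → A ∈ LSet B →
      UpSet B ⊆ F → UpSet A ⊆ F := by
  intro N
  induction N with
  | zero => intro B A h; omega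
  | succ N ih =>
    intro B A hN hAB hB
    obtain ⟨hA, hle⟩ := hAB
    by_cases hEq : A = B
    · rwa [hEq]
    set a : Fin B.card ↪o Fin n := A.orderEmbOfFin hA with ha_def
    set b : Fin B.card ↪o Fin n := B.orderEmbOfFin rfl with hb_def
    have hex : ∃ i, a i ≠ b i := by
      by_contra hq
      push_neg at hq
      apply hEq
      have hfe : ⇑a = ⇑b := funext hq
      have h1 : (A : Set (Fin n)) = (B : Set (Fin n)) := by
        rw [← Finset.range_orderEmbOfFin A hA, ← Finset.range_orderEmbOfFin B rfl]
        exact congrArg Set.range hfe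
      exact_mod_cast h1
    set S : Finset (Fin B.card) := Finset.univ.filter fun i => a i ≠ b i with hS_def
    have hSne : S.Nonempty := by
      obtain ⟨i, hi⟩ := hex
      exact ⟨i, by simp [hS_def, hi]⟩
    set i : Fin B.card := S.min' hSne with hi_def
    have hine : a i ≠ b i := (Finset.mem_filter.mp (S.min'_mem hSne)).2
    have hmin : ∀ j, j < i → a j = b j := by
      intro j hj
      by_contra hne
      exact absurd (S.min'_le j (Finset.mem_filter.mpr ⟨Finset.mem_univ _, hne⟩))
        (not_le.2 hj)
    have habi : a i < b i := lt_of_le_of_ne (hle i) hine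
    have hbmem : b i ∈ B := Finset.orderEmbOfFin_mem B rfl i
    have hanotin : a i ∉ B := by
      intro hmem
      have : (a i : Fin n) ∈ Set.range ⇑b := by
        rw [hb_def, Finset.range_orderEmbOfFin]; exact hmem
      obtain ⟨j, hj⟩ := this
      rcases lt_or_ge j i with hji | hij
      · exact absurd (a.injective ((hmin j hji).trans hj)) (ne_of_lt hji)
      · exact absurd (hj ▸ b.monotone hij) (not_le.2 habi)
    set B' : Finset (Fin n) := insert (a i) (B.erase (b i)) with hB'_def
    have hanotin' : (a i : Fin n) ∉ B.erase (b i) := fun h => hanotin (Finset.mem_of_mem_erase h)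
    have hBpos : 0 < B.card := Finset.card_pos.2 ⟨b i, hbmem⟩
    have hcard : B'.card = B.card := by
      rw [hB'_def, Finset.card_insert_of_notMem hanotin', Finset.card_erase_of_mem hbmem]
      omega
    have hB'F : UpSet B' ⊆ F := step_lemma hcomp hbmem hanotin habi hB
    set f : Fin B.card → Fin n := fun j => if j = i then a i else b j with hf_def
    have hfmem : ∀ j, f j ∈ B' := by
      intro j
      simp only [hf_def, hB'_def]
      by_cases hj : j = i
      · simp [hj]
      · simp only [if_neg hj]
        exact Finset.mem_insert_of_mem
          (Finset.mem_erase.2 ⟨fun h => hj (b.injective h), Finset.orderEmbOfFin_mem B rfl j⟩)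
    have hfmono : StrictMono f := by
      intro p q hpq
      simp only [hf_def]
      by_cases hp : p = i
      · subst hp
        rw [if_pos rfl, if_neg (ne_of_gt hpq)]
        exact lt_trans habi (b.strictMono hpq)
      · by_cases hq : q = i
        · subst hq
          rw [if_neg hp, if_pos rfl, ← hmin p hpq]
          exact a.strictMono hpq
        · rw [if_neg hp, if_neg hq]
          exact b.strictMono hpq
    have horder : f = ⇑(B'.orderEmbOfFin hcard) :=
      Finset.orderEmbOfFin_unique hcard hfmem hfmono
    have hA' : A.card = B'.card := hA.trans hcard.symm
    have e : B'.card = B.card := hcard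
    have hALB' : A ∈ LSet B' := by
      refine ⟨hA', fun j => ?_⟩
      rw [orderEmbOfFin_cast A hA hA' e j, orderEmbOfFin_cast B' hcard rfl e j, ← horder]
      by_cases hj : Fin.cast e j = i
      · simp [hf_def, hj]
        exact le_rfl
      · simp only [hf_def, if_neg hj]
        exact hle _
    have hsum : (∑ x ∈ B', (x : ℕ)) < N := by
      have h1 : (∑ x ∈ B', (x : ℕ)) = (a i : ℕ) + ∑ x ∈ B.erase (b i), (x : ℕ) := by
        rw [hB'_def, Finset.sum_insert hanotin']
      have h2 : (∑ x ∈ B.erase (b i), (x : ℕ)) + (b i : ℕ) = ∑ x ∈ B, (x : ℕ) :=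
        Finset.sum_erase_add B _ hbmem
      have h3 : (a i : ℕ) < (b i : ℕ) := habi
      omega
    exact ih B' A hsum hALB' hB'F

lemma mem_LSet_self (B : Finset (Fin n)) : B ∈ LSet B :=
  ⟨rfl, fun _ => le_rfl⟩

lemma exists_min (g : Set (Finset (Fin n))) :
    ∀ (k : ℕ) (B : Finset (Fin n)), B.card < k → B ∈ LFam g →
      ∃ A ∈ Lstar g, A ⊆ B := by
  intro k
  induction k with
  | zero => intro B h; omega
  | succ k ih =>
    intro B hk hB
    by_cases h : ∀ A' ∈ LFam g, A' ⊆ B → A' = B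
    · exact ⟨B, ⟨hB, h⟩, subset_rfl⟩
    · push_neg at h
      obtain ⟨A', hA', hsub, hne⟩ := h
      have hlt : A'.card < B.card := Finset.card_lt_card (ssubset_of_subset_of_ne hsub hne)
      obtain ⟨A, hA, hAs⟩ := ih A' (by omega) hA'
      exact ⟨A, hA, hAs.trans hsub⟩

lemma sPlus_le_of_LSet {A B : Finset (Fin n)} (h : A ∈ LSet B) : sPlus A ≤ sPlus B := by
  obtain ⟨hA, hle⟩ := h
  apply Finset.sup_le
  intro x hx
  have hx' : x ∈ Set.range (A.orderEmbOfFin hA) := by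
    rw [Finset.range_orderEmbOfFin]; exact hx
  obtain ⟨i, rfl⟩ := hx'
  calc ((A.orderEmbOfFin hA) i : ℕ) + 1 ≤ ((B.orderEmbOfFin rfl) i : ℕ) + 1 := by
        exact Nat.add_le_add_right (Fin.le_def.mp (hle i)) 1
    _ ≤ sPlus B := by unfold sPlus; exact Finset.le_sup (f := fun x : Fin n => (x : ℕ) + 1) (Finset.orderEmbOfFin_mem B rfl i)

lemma sPlus_le_n (B : Finset (Fin n)) : sPlus B ≤ n :=
  Finset.sup_le fun x _ => x.isLt

end Aux

/-- For a maximal, fixed and compressed `t`-cycle-intersecting family `F` and any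
generating set `g` of `F`: (1) `L_*(g)` is a generating set of `F`;
(2) `s⁺(L_*(g)) ≤ s⁺(g)`; (3) any left-shift of a set of `g` contains (possibly
properly) a member of `L_*(g)`. -/
theorem stmt12 {n t : ℕ} (F : Set (Equiv.Perm (Fin n)))
    (hF : TCycleIntersecting t F)
    (hmax : ∀ σ ∉ F, ¬ TCycleIntersecting t (insert σ F))
    (hfix : IsFixedFam F) (hcomp : IsCompressedFam F)
    (g : Set (Finset (Fin n))) (hg : IsGenSet g F) :
    IsGenSet (Lstar g) F ∧ sPlusFam (Lstar g) ≤ sPlusFam g ∧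
      ∀ B ∈ LFam g, ∃ A ∈ Lstar g, A ⊆ B := by
  obtain ⟨hgcard, hgUp⟩ := hg
  have part3 : ∀ B ∈ LFam g, ∃ A ∈ Lstar g, A ⊆ B := fun B hB =>
    exists_min g (B.card + 1) B (Nat.lt_succ_self _) hB
  have hUpB : ∀ B ∈ g, UpSet B ⊆ F := by
    intro B hB σ hσ
    rw [← hgUp]
    exact Set.mem_biUnion hB hσ
  have hLsub : ∀ A ∈ LFam g, UpSet A ⊆ F := by
    intro A hA
    obtain ⟨B, hBg, hAB⟩ := Set.mem_iUnion₂.1 hA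
    exact key_lemma hcomp ((∑ x ∈ B, (x : ℕ)) + 1) B A (Nat.lt_succ_self _) hAB (hUpB B hBg)
  refine ⟨⟨?_, ?_⟩, ?_, part3⟩
  · intro A hA
    obtain ⟨B, hBg, hAB⟩ := Set.mem_iUnion₂.1 hA.1
    obtain ⟨hc, -⟩ := hAB
    rw [hc]
    exact hgcard B hBg
  · apply Set.Subset.antisymm
    · intro σ hσ
      obtain ⟨A, hAL, hσA⟩ := Set.mem_iUnion₂.1 hσ
      exact hLsub A hAL.1 hσA
    · intro σ hσ
      rw [← hgUp] at hσ
      obtain ⟨B, hBg, hσB⟩ := Set.mem_iUnion₂.1 hσ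
      have hBL : B ∈ LFam g := Set.mem_iUnion₂.2 ⟨B, hBg, mem_LSet_self B⟩
      obtain ⟨A, hALs, hAB⟩ := part3 B hBL
      exact Set.mem_iUnion₂.2 ⟨A, hALs, fun x hx => hσB x (hAB hx)⟩
  · apply csSup_le'
    rintro m ⟨A, hA, rfl⟩
    obtain ⟨B, hBg, hAB⟩ := Set.mem_iUnion₂.1 hA.1
    calc sPlus A ≤ sPlus B := sPlus_le_of_LSet hAB
      _ ≤ sPlusFam g := le_csSup
          ⟨n, by rintro m ⟨C, hC, rfl⟩; exact sPlus_le_n C⟩ ⟨B, hBg, rfl⟩
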